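/- Let H be a separable analytic reproducing kernel Hilbert space of E-valued functions on 𝔻 on which the multiplication operator M_z is bounded, and let E₀ be a subset of E whose linear span is dense in E. If there exists a strictly increasing sequence (n_k) of natural numbers such that sup_{η ∈ E₀} (1/(n_k!)²)‖K_{n_k,η}‖²_H → 0 as k → ∞ (i.e., liminf_n (1/(n!)²)‖K_{n,η}‖² = 0 uniformly in η ∈ E₀), then M_z* is hypercyclic on H. -/

import Mathlib

open Metric Filter ContinuousLinearMap

section auxlemmas
variable {F : Type*} [NormedAddCommGroup F] [NormedSpace ℂ F] [CompleteSpace F]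

lemma aux_smul_deriv (n : ℕ) :
    ∀ (g : ℂ → F), AnalyticOnNhd ℂ g (ball (0:ℂ) 1) →
      iteratedDerivWithin (n+1) (fun w => w • g w) (ball (0:ℂ) 1) 0
        = ((n+1 : ℕ) : ℂ) • iteratedDerivWithin n g (ball (0:ℂ) 1) 0 := by
  have hs : IsOpen (ball (0:ℂ) 1) := isOpen_ball
  have hu : UniqueDiffOn ℂ (ball (0:ℂ) 1) := hs.uniqueDiffOn
  have h0 : (0:ℂ) ∈ ball (0:ℂ) 1 := by simp
  induction n with
  | zero =>
    intro g hg
    have hd : HasDerivAt (fun w : ℂ => w • g w) ((0:ℂ) • (deriv g 0) + (1:ℂ) • g 0) 0 :=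
      (hasDerivAt_id 0).smul ((hg 0 h0).differentiableAt.hasDerivAt)
    rw [iteratedDerivWithin_one]
    rw [derivWithin_of_isOpen hs h0, hd.deriv]
    simp [iteratedDerivWithin_zero]
  | succ n IH =>
    intro g hg
    have hg' : AnalyticOnNhd ℂ (deriv g) (ball (0:ℂ) 1) := hg.deriv
    have heq : Set.EqOn (derivWithin (fun w : ℂ => w • g w) (ball (0:ℂ) 1))
        (fun w : ℂ => g w + w • deriv g w) (ball (0:ℂ) 1) := by
      intro y hy
      have hd : HasDerivAt (fun w : ℂ => w • g w) (y • (deriv g y) + (1:ℂ) • g y) y :=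
        (hasDerivAt_id y).smul ((hg y hy).differentiableAt.hasDerivAt)
      rw [derivWithin_of_isOpen hs hy, hd.deriv]
      simp [add_comm]
    rw [iteratedDerivWithin_succ']
    rw [iteratedDerivWithin_congr heq h0]
    have hca : ContDiffOn ℂ (n+1 : ℕ) g (ball (0:ℂ) 1) := hg.contDiffOn hu
    have hzg' : AnalyticOnNhd ℂ (fun w : ℂ => w • deriv g w) (ball (0:ℂ) 1) :=
      analyticOnNhd_id.smul hg'
    have hcb : ContDiffOn ℂ (n+1 : ℕ) (fun w : ℂ => w • deriv g w) (ball (0:ℂ) 1) :=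
      hzg'.contDiffOn hu
    have hadd := iteratedDerivWithin_add (n := n+1) h0 hu (hca 0 h0) (hcb 0 h0)
    have : (fun w : ℂ => g w + w • deriv g w) = g + (fun w : ℂ => w • deriv g w) := rfl
    rw [this, hadd, IH (deriv g) hg']
    have hstep : iteratedDerivWithin n (deriv g) (ball (0:ℂ) 1) 0
        = iteratedDerivWithin (n+1) g (ball (0:ℂ) 1) 0 := by
      rw [iteratedDerivWithin_succ']
      exact (iteratedDerivWithin_congr
        (fun y hy => (derivWithin_of_isOpen hs hy)) h0).symm
    rw [hstep]
    push_cast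
    ring_nf
    module

lemma aux_eq_zero (g : ℂ → F) (hg : AnalyticOnNhd ℂ g (ball (0:ℂ) 1))
    (h : ∀ n : ℕ, iteratedDerivWithin n g (ball (0:ℂ) 1) 0 = 0) :
    Set.EqOn g 0 (ball (0:ℂ) 1) := by
  have hs : IsOpen (ball (0:ℂ) 1) := isOpen_ball
  have h0 : (0:ℂ) ∈ ball (0:ℂ) 1 := by simp
  have hder : ∀ n : ℕ, iteratedDeriv n g 0 = 0 := by
    intro n
    rw [iteratedDeriv, ← iteratedFDerivWithin_of_isOpen n hs h0]
    rw [← h n, iteratedDerivWithin_eq_iteratedFDerivWithin]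
  obtain ⟨p, hp⟩ := hg 0 h0
  obtain ⟨r, hpr⟩ := hp
  have hzero : ∀ᶠ z in nhds (0:ℂ), g z = 0 := by
    have hmem : EMetric.ball (0:ℂ) r ∈ nhds (0:ℂ) :=
      EMetric.ball_mem_nhds 0 hpr.r_pos
    filter_upwards [hmem] with z hz
    have hz' : z - 0 ∈ EMetric.ball (0:ℂ) r := by simpa using hz
    have hsum := hpr.hasSum_iteratedFDeriv (y := z) (by simpa [EMetric.ball] using hz')
    have hterm : ∀ n : ℕ,
        ((n.factorial : ℂ)⁻¹ • iteratedFDeriv ℂ n g 0 fun _ => z) = 0 := by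
      intro n
      have : (iteratedFDeriv ℂ n g 0 fun _ => z)
          = z ^ n • iteratedDeriv n g 0 := by
        have := (iteratedFDeriv ℂ n g 0).map_smul_univ (fun _ : Fin n => z)
          (fun _ : Fin n => (1:ℂ))
        simpa [iteratedDeriv, Finset.prod_const, smul_smul] using this
      rw [this, hder n, smul_zero, smul_zero]
    have : HasSum (fun n : ℕ =>
        ((n.factorial : ℂ)⁻¹ • iteratedFDeriv ℂ n g 0 fun _ => z)) 0 := by
      simpa [hterm] using hasSum_zero (α := F) (β := ℕ)
    have hgz := hsum.unique this
    simpa using hgz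
  have := hg.eqOn_zero_of_preconnected_of_eventuallyEq_zero
    (convex_ball (0:ℂ) 1).isPreconnected h0 hzero
  exact this

end auxlemmas

lemma aux_birkhoff {X : Type*} [TopologicalSpace X] [BaireSpace X]
    [SecondCountableTopology X] [Nonempty X]
    (T : ℕ → X → X) (hT : ∀ m, Continuous (T m))
    (htrans : ∀ U V : Set X, IsOpen U → IsOpen V → U.Nonempty → V.Nonempty →
      ∃ (m : ℕ) (x : X), x ∈ U ∧ T m x ∈ V) :
    ∃ g : X, Dense (Set.range fun m => T m g) := by
  obtain ⟨b, hbc, hbne, hb⟩ := TopologicalSpace.exists_countable_basis X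
  have hbnonempty : b.Nonempty := by
    by_contra hne
    rw [Set.not_nonempty_iff_eq_empty] at hne
    have : IsOpen (Set.univ : Set X) := isOpen_univ
    obtain ⟨x⟩ := (inferInstance : Nonempty X)
    obtain ⟨v, hv, hxv, _⟩ := hb.exists_subset_of_mem_open (Set.mem_univ x) this
    rw [hne] at hv; exact hv
  obtain ⟨f, hf⟩ := Set.Countable.exists_eq_range hbc hbnonempty
  have hopen : ∀ j : ℕ, IsOpen (⋃ m : ℕ, (T m) ⁻¹' (f j)) := by
    intro j
    exact isOpen_iUnion fun m => (hb.isOpen (by rw [hf]; exact ⟨j, rfl⟩)).preimage (hT m)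
  have hdense : ∀ j : ℕ, Dense (⋃ m : ℕ, (T m) ⁻¹' (f j)) := by
    intro j
    rw [dense_iff_inter_open]
    intro U hU hUne
    have hfjne : (f j).Nonempty := by
      rw [Set.nonempty_iff_ne_empty]
      intro hfe
      apply hbne; rw [← hfe, hf]; exact ⟨j, rfl⟩
    obtain ⟨m, x, hxU, hTx⟩ := htrans U (f j) hU
      (hb.isOpen (by rw [hf]; exact ⟨j, rfl⟩)) hUne hfjne
    exact ⟨x, hxU, Set.mem_iUnion.mpr ⟨m, hTx⟩⟩
  have hG : Dense (⋂ j : ℕ, ⋃ m : ℕ, (T m) ⁻¹' (f j)) :=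
    dense_iInter_of_isOpen hopen hdense
  obtain ⟨g, hg⟩ := hG.nonempty
  refine ⟨g, ?_⟩
  rw [dense_iff_inter_open]
  intro U hU hUne
  obtain ⟨x, hxU⟩ := hUne
  obtain ⟨v, hv, hxv, hvU⟩ := hb.exists_subset_of_mem_open hxU hU
  rw [hf] at hv
  obtain ⟨j, rfl⟩ := hv
  have := Set.mem_iInter.mp hg j
  obtain ⟨m, hm⟩ := Set.mem_iUnion.mp this
  exact ⟨T m g, hvU hm, ⟨m, rfl⟩⟩

/-- Theorem (hypercyclicity part): Let `H` be a separable analytic reproducing kernel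
Hilbert space of `E`-valued functions on the unit disc on which `M_z` is bounded, and let
`E₀ ⊆ E` have dense linear span. If there is a strictly increasing sequence `n_k` such
that `(1/(n_k!)²)‖K_{n_k,η}‖² → 0` uniformly in `η ∈ E₀` (i.e.
`liminf (1/(n!)²)‖K_{n,η}‖² = 0` uniformly in `η ∈ E₀`), then `M_z*` is hypercyclic. -/
theorem stmt6 {H E : Type*}
    [NormedAddCommGroup H] [InnerProductSpace ℂ H] [CompleteSpace H]
    [TopologicalSpace.SeparableSpace H]
    [NormedAddCommGroup E] [InnerProductSpace ℂ E] [CompleteSpace E]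
    (ι : H →ₗ[ℂ] (ℂ → E))
    (hinj : ∀ f g : H, Set.EqOn (ι f) (ι g) (ball (0 : ℂ) 1) → f = g)
    (hanal : ∀ f : H, DifferentiableOn ℂ (ι f) (ball (0 : ℂ) 1))
    (heval : ∀ w ∈ ball (0 : ℂ) 1, Continuous fun f : H => ι f w)
    (Mz : H →L[ℂ] H)
    (hMz : ∀ f : H, ∀ w ∈ ball (0 : ℂ) 1, ι (Mz f) w = w • ι f w)
    (K : ℕ → E → H)
    (hK : ∀ (n : ℕ) (η : E) (f : H),
      (inner ℂ f (K n η) : ℂ) =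
        (inner ℂ (iteratedDerivWithin n (ι f) (ball (0 : ℂ) 1) 0) η : ℂ))
    (E₀ : Set E)
    (hE₀ : Dense ((Submodule.span ℂ E₀ : Submodule ℂ E) : Set E))
    (hlim : ∃ nk : ℕ → ℕ, StrictMono nk ∧
      ∀ ε > (0 : ℝ), ∃ N : ℕ, ∀ k ≥ N, ∀ η ∈ E₀,
        (1 / ((nk k).factorial : ℝ) ^ 2) * ‖K (nk k) η‖ ^ 2 < ε) :
    ∃ g : H, Dense (Set.range fun m : ℕ => ((adjoint Mz) ^ m) g) := by
  classical
  have hs : IsOpen (ball (0:ℂ) 1) := isOpen_ball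
  have hu : UniqueDiffOn ℂ (ball (0:ℂ) 1) := hs.uniqueDiffOn
  have h0 : (0:ℂ) ∈ ball (0:ℂ) 1 := by simp
  set T : H →L[ℂ] H := adjoint Mz with hTdef
  have hanal' : ∀ f : H, AnalyticOnNhd ℂ (ι f) (ball (0:ℂ) 1) :=
    fun f => (hanal f).analyticOnNhd hs
  -- Step 1 : action of T on kernels
  have hTK1 : ∀ (n : ℕ) (η : E), T (K (n+1) η) = ((n+1 : ℕ) : ℂ) • K n η := by
    intro n η
    apply ext_inner_left ℂ
    intro f
    rw [hTdef, adjoint_inner_right, hK]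
    have heq : Set.EqOn (ι (Mz f)) (fun w => w • ι f w) (ball (0:ℂ) 1) :=
      fun w hw => hMz f w hw
    rw [iteratedDerivWithin_congr heq h0, aux_smul_deriv n (ι f) (hanal' f),
      inner_smul_left, inner_smul_right, hK]
    norm_num
  have hTK0 : ∀ η : E, T (K 0 η) = 0 := by
    intro η
    apply ext_inner_left ℂ
    intro f
    rw [hTdef, adjoint_inner_right, hK]
    rw [iteratedDerivWithin_zero]
    rw [hMz f 0 h0]
    simp
  -- Step 2 : iterated action
  have hTpow : ∀ (p m : ℕ) (η : E),
      ((m.factorial : ℂ)) • ((T^p) (K (m+p) η)) = (((m+p).factorial : ℂ)) • K m η := by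
    intro p m η
    induction p with
    | zero => simp
    | succ p IH =>
      have hidx : m + (p+1) = (m+p) + 1 := by ring
      rw [pow_succ, mul_apply_eq_comp, hidx, hTK1 (m+p) η, map_smul, smul_comm]
      rw [IH]
      rw [smul_smul]
      congr 1
      push_cast [Nat.factorial_succ]
      ring
  have hTkillK : ∀ (m : ℕ) (η : E), (T^(m+1)) (K m η) = 0 := by
    intro m η
    induction m with
    | zero => rw [pow_one]; exact hTK0 η
    | succ m IH =>
      rw [pow_succ, mul_apply_eq_comp, hTK1 m η, map_smul, IH, smul_zero]
  have hTkill : ∀ (m p : ℕ) (η : E), m + 1 ≤ p → (T^p) (K m η) = 0 := by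
    intro m p η hp
    obtain ⟨q, rfl⟩ := Nat.exists_eq_add_of_le hp
    rw [add_comm, pow_add, mul_apply_eq_comp, hTkillK m η, map_zero]
  -- norm bound
  set Cn : ℝ := max 1 ‖T‖ with hCn
  have hCn1 : (1:ℝ) ≤ Cn := le_max_left _ _
  have hCn0 : (0:ℝ) ≤ Cn := le_trans zero_le_one hCn1
  have hTnorm : ∀ (q : ℕ) (x : H), ‖(T^q) x‖ ≤ Cn^q * ‖x‖ := by
    intro q
    induction q with
    | zero => intro x; simp
    | succ q IH =>
      intro x
      rw [pow_succ, mul_apply_eq_comp]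
      calc ‖(T^q) (T x)‖ ≤ Cn^q * ‖T x‖ := IH (T x)
        _ ≤ Cn^q * (Cn * ‖x‖) := by
            have := T.le_opNorm x
            have h2 : ‖T x‖ ≤ Cn * ‖x‖ :=
              le_trans this (mul_le_mul_of_nonneg_right (le_max_right _ _) (norm_nonneg x))
            exact mul_le_mul_of_nonneg_left h2 (pow_nonneg hCn0 q)
        _ = Cn^(q+1) * ‖x‖ := by ring
  -- Step 3 : density of the span of kernels
  set G : Set H := {h : H | ∃ (n : ℕ) (η : E), η ∈ E₀ ∧ h = K n η} with hGdef
  set D : Submodule ℂ H := Submodule.span ℂ G with hDdef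
  have hD : Dense (D : Set H) := by
    rw [Submodule.dense_iff_topologicalClosure_eq_top,
      Submodule.topologicalClosure_eq_top_iff]
    rw [Submodule.eq_bot_iff]
    intro x hx
    have hxK : ∀ (n : ℕ), ∀ η ∈ E₀, (inner ℂ x (K n η) : ℂ) = 0 := by
      intro n η hη
      rw [inner_eq_zero_symm]
      exact (Submodule.mem_orthogonal D x).mp hx (K n η)
        (Submodule.subset_span ⟨n, η, hη, rfl⟩)
    have hd : ∀ n : ℕ, iteratedDerivWithin n (ι x) (ball (0:ℂ) 1) 0 = 0 := by
      intro n
      set d := iteratedDerivWithin n (ι x) (ball (0:ℂ) 1) 0 with hddef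
      have hE₀d : ∀ η ∈ E₀, (inner ℂ d η : ℂ) = 0 := by
        intro η hη
        rw [← hK n η x]
        exact hxK n η hη
      have hspan : ∀ y ∈ Submodule.span ℂ E₀, (inner ℂ d y : ℂ) = 0 := by
        intro y hy
        induction hy using Submodule.span_induction with
        | mem y hy => exact hE₀d y hy
        | zero => simp
        | add y z _ _ hy hz => rw [inner_add_right, hy, hz, add_zero]
        | smul a y _ hy => rw [inner_smul_right, hy, mul_zero]
      have hall : (inner ℂ d d : ℂ) = 0 := by
        have hcl : IsClosed {y : E | (inner ℂ d y : ℂ) = 0} :=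
          isClosed_eq (continuous_const.inner continuous_id) continuous_const
        have hsub : ((Submodule.span ℂ E₀ : Submodule ℂ E) : Set E) ⊆
            {y : E | (inner ℂ d y : ℂ) = 0} := fun y hy => hspan y hy
        have hdt : Dense {y : E | (inner ℂ d y : ℂ) = 0} := hE₀.mono hsub
        have huniv := hdt.closure_eq
        rw [hcl.closure_eq] at huniv
        have : d ∈ {y : E | (inner ℂ d y : ℂ) = 0} := huniv ▸ Set.mem_univ d
        exact this
      rwa [inner_self_eq_zero] at hall
    have hzero : Set.EqOn (ι x) 0 (ball (0:ℂ) 1) := aux_eq_zero (ι x) (hanal' x) hd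
    have : Set.EqOn (ι x) (ι 0) (ball (0:ℂ) 1) := by
      rw [map_zero]
      exact hzero
    exact hinj x 0 this
  -- Step 4 : topological transitivity
  have hkillall : ∀ x : H, x ∈ D → ∃ N : ℕ, ∀ n ≥ N, (T^n) x = 0 := by
    intro x hx
    induction hx using Submodule.span_induction with
    | mem y hy =>
      obtain ⟨n, η, hη, rfl⟩ := hy
      exact ⟨n+1, fun q hq => hTkill n q η hq⟩
    | zero => exact ⟨0, fun n _ => map_zero _⟩
    | add y z _ _ hy hz =>
      obtain ⟨N₁, h₁⟩ := hy
      obtain ⟨N₂, h₂⟩ := hz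
      exact ⟨max N₁ N₂, fun n hn => by
        rw [map_add, h₁ n (le_trans (le_max_left _ _) hn),
          h₂ n (le_trans (le_max_right _ _) hn), add_zero]⟩
    | smul a y _ hy =>
      obtain ⟨N, h⟩ := hy
      exact ⟨N, fun n hn => by rw [map_smul, h n hn, smul_zero]⟩
  obtain ⟨nk, hmono, hunif⟩ := hlim
  have htrans : ∀ U V : Set H, IsOpen U → IsOpen V → U.Nonempty → V.Nonempty →
      ∃ (m : ℕ) (x : H), x ∈ U ∧ (T^m) x ∈ V := by
    intro U V hU hV hUne hVne
    obtain ⟨u, huD, huU⟩ := hD.exists_mem_open hU hUne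
    obtain ⟨v, hvD, hvV⟩ := hD.exists_mem_open hV hVne
    obtain ⟨ε, hε, hball⟩ := (Metric.isOpen_iff.mp hU) u huU
    obtain ⟨N₁, hN₁⟩ := hkillall u huD
    -- representation of v
    have hvrep := Submodule.mem_span_set'.mp (hvD : v ∈ Submodule.span ℂ G)
    obtain ⟨nv, d, w, hsum⟩ := hvrep
    have hwP : ∀ i : Fin nv, ∃ (n : ℕ) (η : E), η ∈ E₀ ∧ (w i : H) = K n η :=
      fun i => (w i).2
    choose p ζ hζ hw using hwP
    set Mv : ℕ := Finset.univ.sup p with hMv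
    have hpMv : ∀ i, p i ≤ Mv := fun i => Finset.le_sup (Finset.mem_univ i)
    set A : ℝ := ∑ i : Fin nv, ‖d i‖ * (p i).factorial with hA
    have hA0 : 0 ≤ A := Finset.sum_nonneg fun i _ => by positivity
    set ε' : ℝ := ε / (2 * (A + 1) * Cn ^ Mv) with hε'def
    have hε' : 0 < ε' := by
      apply div_pos hε
      positivity
    obtain ⟨N₂, hN₂⟩ := hunif (ε' ^ 2) (by positivity)
    set k : ℕ := max N₂ (N₁ + Mv) with hk
    have hnkk : N₁ + Mv ≤ nk k := le_trans (le_max_right _ _) hmono.le_apply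
    set n₀ : ℕ := nk k - Mv with hn₀
    have hn₀Mv : n₀ + Mv = nk k := Nat.sub_add_cancel (le_trans (Nat.le_add_left _ _) hnkk)
    have hn₀N₁ : N₁ ≤ n₀ := by omega
    -- the correction term
    set c : H := ∑ i : Fin nv,
      ((d i * ((p i).factorial : ℂ)) / (((p i + n₀).factorial : ℂ))) • K (p i + n₀) (ζ i)
      with hc
    have hfac_ne : ∀ m : ℕ, ((m.factorial : ℂ)) ≠ 0 := by
      intro m
      exact_mod_cast Nat.cast_ne_zero.mpr (Nat.factorial_ne_zero m)
    have key1 : (T^n₀) c = v := by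
      rw [hc, map_sum]
      rw [← hsum]
      apply Finset.sum_congr rfl
      intro i _
      rw [map_smul, hw i]
      have h1 := hTpow n₀ (p i) (ζ i)
      -- ((p i)! ) • T^n₀ (K (p i + n₀)) = ((p i + n₀)!) • K (p i)
      have : (T^n₀) (K (p i + n₀) (ζ i)) =
          ((((p i + n₀).factorial : ℂ)) / (((p i).factorial : ℂ))) • K (p i) (ζ i) := by
        have h2 := congrArg (fun y => (((p i).factorial : ℂ))⁻¹ • y) h1
        simp only [smul_smul] at h2
        rw [inv_mul_cancel₀ (hfac_ne (p i)), one_smul] at h2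
        rw [h2, div_eq_inv_mul]
      rw [this, smul_smul]
      congr 1
      have hne1 := hfac_ne (p i)
      have hne2 := hfac_ne (p i + n₀)
      field_simp
    have key2 : ‖c‖ < ε := by
      have hterm : ∀ i : Fin nv,
          ‖((d i * ((p i).factorial : ℂ)) / (((p i + n₀).factorial : ℂ))) •
            K (p i + n₀) (ζ i)‖ ≤ ‖d i‖ * (p i).factorial * (Cn ^ Mv) * ε' := by
        intro i
        rw [norm_smul]
        -- norm of K (p i + n₀)
        have h1 := hTpow (Mv - p i) (p i + n₀) (ζ i)
        have hidx : p i + n₀ + (Mv - p i) = nk k := by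
          have := hpMv i; omega
        rw [hidx] at h1
        have hnorm := congrArg norm h1
        rw [norm_smul, norm_smul] at hnorm
        simp only [Complex.norm_natCast] at hnorm
        -- hnorm : (p i + n₀)! * ‖T^(Mv - p i) (K (nk k) (ζ i))‖ = (nk k)! * ‖K (p i + n₀) (ζ i)‖
        have hKb : ‖K (p i + n₀) (ζ i)‖ ≤
            (((p i + n₀).factorial : ℝ) / ((nk k).factorial : ℝ)) * Cn ^ Mv *
              ‖K (nk k) (ζ i)‖ := by
          have hTb : ‖(T^(Mv - p i)) (K (nk k) (ζ i))‖ ≤ Cn ^ Mv * ‖K (nk k) (ζ i)‖ := by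
            calc ‖(T^(Mv - p i)) (K (nk k) (ζ i))‖ ≤ Cn ^ (Mv - p i) * ‖K (nk k) (ζ i)‖ :=
                hTnorm _ _
              _ ≤ Cn ^ Mv * ‖K (nk k) (ζ i)‖ := by
                  apply mul_le_mul_of_nonneg_right _ (norm_nonneg _)
                  exact pow_le_pow_right₀ hCn1 (Nat.sub_le _ _)
          have hfk : (0:ℝ) < ((nk k).factorial : ℝ) := by
            exact_mod_cast (Nat.factorial_pos _)
          have heq : ‖K (p i + n₀) (ζ i)‖ =
              ((p i + n₀).factorial : ℝ) * ‖(T^(Mv - p i)) (K (nk k) (ζ i))‖ /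
                ((nk k).factorial : ℝ) := by
            rw [eq_div_iff hfk.ne', hnorm, mul_comm]
          rw [heq]
          calc ((p i + n₀).factorial : ℝ) * ‖(T^(Mv - p i)) (K (nk k) (ζ i))‖ /
                ((nk k).factorial : ℝ)
              ≤ ((p i + n₀).factorial : ℝ) * (Cn ^ Mv * ‖K (nk k) (ζ i)‖) /
                ((nk k).factorial : ℝ) := by gcongr
            _ = (((p i + n₀).factorial : ℝ) / ((nk k).factorial : ℝ)) * Cn ^ Mv *
                ‖K (nk k) (ζ i)‖ := by ring
        have hKnk : ‖K (nk k) (ζ i)‖ / ((nk k).factorial : ℝ) < ε' := by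
          have := hN₂ k (le_max_left _ _) (ζ i) (hζ i)
          have hsq : (‖K (nk k) (ζ i)‖ / ((nk k).factorial : ℝ))^2 < ε' ^ 2 := by
            rw [div_pow]
            calc ‖K (nk k) (ζ i)‖^2 / ((nk k).factorial : ℝ)^2
                = (1 / ((nk k).factorial : ℝ)^2) * ‖K (nk k) (ζ i)‖^2 := by ring
              _ < ε' ^ 2 := this
          by_contra hcon
          push_neg at hcon
          have : ε' ^ 2 ≤ (‖K (nk k) (ζ i)‖ / ((nk k).factorial : ℝ))^2 :=
            pow_le_pow_left₀ (le_of_lt hε') hcon 2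
          linarith
        have hcoeff : ‖(d i * ((p i).factorial : ℂ)) / (((p i + n₀).factorial : ℂ))‖
            = ‖d i‖ * ((p i).factorial : ℝ) / (((p i + n₀).factorial : ℝ)) := by
          rw [norm_div, norm_mul]
          simp [Complex.norm_natCast]
        rw [hcoeff]
        have hfp : (0:ℝ) < (((p i + n₀).factorial : ℝ)) := by
          exact_mod_cast Nat.factorial_pos _
        calc ‖d i‖ * ((p i).factorial : ℝ) / (((p i + n₀).factorial : ℝ)) *
              ‖K (p i + n₀) (ζ i)‖
            ≤ ‖d i‖ * ((p i).factorial : ℝ) / (((p i + n₀).factorial : ℝ)) *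
              ((((p i + n₀).factorial : ℝ) / ((nk k).factorial : ℝ)) * Cn ^ Mv *
                ‖K (nk k) (ζ i)‖) := by
              apply mul_le_mul_of_nonneg_left hKb
              positivity
          _ = ‖d i‖ * ((p i).factorial : ℝ) * Cn ^ Mv *
              (‖K (nk k) (ζ i)‖ / ((nk k).factorial : ℝ)) := by
              field_simp
          _ ≤ ‖d i‖ * ((p i).factorial : ℝ) * Cn ^ Mv * ε' := by
              apply mul_le_mul_of_nonneg_left (le_of_lt hKnk)
              positivity
      calc ‖c‖ ≤ ∑ i : Fin nv, ‖((d i * ((p i).factorial : ℂ)) /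
            (((p i + n₀).factorial : ℂ))) • K (p i + n₀) (ζ i)‖ := norm_sum_le _ _
        _ ≤ ∑ i : Fin nv, ‖d i‖ * (p i).factorial * (Cn ^ Mv) * ε' :=
            Finset.sum_le_sum fun i _ => hterm i
        _ = A * Cn ^ Mv * ε' := by rw [hA, Finset.sum_mul, Finset.sum_mul]
        _ = ε * (A / (2 * (A+1))) := by
            rw [hε'def]
            field_simp
        _ < ε := by
            have h1 : A / (2 * (A+1)) < 1 := by
              rw [div_lt_one (by positivity)]
              linarith
            calc ε * (A / (2 * (A+1))) < ε * 1 :=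
                mul_lt_mul_of_pos_left h1 hε
              _ = ε := mul_one ε
    refine ⟨n₀, u + c, ?_, ?_⟩
    · apply hball
      simp only [mem_ball, dist_eq_norm]
      simpa using key2
    · rw [map_add, hN₁ n₀ hn₀N₁, key1, zero_add]
      exact hvV
  -- Step 5 : Birkhoff
  haveI : Nonempty H := ⟨0⟩
  haveI := UniformSpace.secondCountable_of_separable H
  obtain ⟨g, hg⟩ := aux_birkhoff (fun m (x : H) => (T^m) x)
    (fun m => (T^m).continuous) htrans
  exact ⟨g, hg⟩
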